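/- arXiv:2506.07306 — 2 statements merged into one kernel-verified Lean document; each statement's English description precedes it below -/
import Mathlib

section
/- Let w ∈ S_n and fix i. For subsets U, U' of φ_i(w), we have w_{U,i} ≤ w_{U',i} in Bruhat order if and only if U ⊆ U'. Consequently the set {w_{U,i} : U ⊆ φ_i(w)} forms a Boolean lattice under Bruhat order. -/
/-- Coxeter length of a permutation of `Fin n`: number of inversions. -/
def len {n : ℕ} (w : Equiv.Perm (Fin n)) : ℕ :=
  (Finset.univ.filter (fun p : Fin n × Fin n => p.1 < p.2 ∧ w p.2 < w p.1)).card

/-- The longest permutation `w₀` of `S_n` (reversal). -/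
def longest (n : ℕ) : Equiv.Perm (Fin n) := Fin.revPerm

/-- The simple transposition `s_i` (1-based index `i ∈ [n-1]`), exchanging
positions `i` and `i+1` of the one-line notation. -/
def simpleRefl (n i : ℕ) : Equiv.Perm (Fin n) :=
  if h : 1 ≤ i ∧ i < n then Equiv.swap ⟨i - 1, by omega⟩ ⟨i, by omega⟩ else 1

/-- The Hecke (Demazure) up-operator: `w * τ_i = w` if `ℓ(w s_i) < ℓ(w)`, else `w s_i`. -/
def heckeStar {n : ℕ} (w : Equiv.Perm (Fin n)) (i : ℕ) : Equiv.Perm (Fin n) :=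
  if len (w * simpleRefl n i) < len w then w else w * simpleRefl n i

/-- The down-operator: `w □ τ_i = w` if `ℓ(w s_i) > ℓ(w)`, else `w s_i`. -/
def heckeSq {n : ℕ} (w : Equiv.Perm (Fin n)) (i : ℕ) : Equiv.Perm (Fin n) :=
  if len w < len (w * simpleRefl n i) then w else w * simpleRefl n i

/-- The rank function of a permutation: `rk_w(a,b) = #{i ∈ [a] : w(i) ∈ [b]}`
(here encoded 0-based: positions `m` with `m < a` and values `w(m) < b`). -/
def rk {n : ℕ} (w : Equiv.Perm (Fin n)) (a b : ℕ) : ℕ :=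
  (Finset.univ.filter (fun m : Fin n => (m : ℕ) < a ∧ (w m : ℕ) < b)).card

/-- Bruhat order on `S_n`: the reflexive-transitive closure of the covering
relation `u ⋖ u t` with `t` a transposition and `ℓ(ut) = ℓ(u) + 1`. -/
def bruhatLE {n : ℕ} (u v : Equiv.Perm (Fin n)) : Prop :=
  Relation.ReflTransGen
    (fun x y => (∃ t : Equiv.Perm (Fin n), t.IsSwap ∧ y = x * t) ∧ len y = len x + 1) u v

/-- `(a, w a)` is a neighbor of `(i, w i)` in the graph of `w ∈ S_n`:
`i ≤ a`, `w i ≤ w a`, `(a, w a) ≠ (i, w i)`, and no other point of the graph of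
`w` lies in the rectangle `[i,a] × [w i, w a]`. -/
def isNbrF {n : ℕ} (w : Equiv.Perm (Fin n)) (i a : Fin n) : Prop :=
  i ≤ a ∧ w i ≤ w a ∧ (a, w a) ≠ (i, w i) ∧
    ∀ a' : Fin n, i ≤ a' → a' ≤ a → w i ≤ w a' → w a' ≤ w a → a' = i ∨ a' = a

/-- For `U = {i_1 < i_2 < ⋯ < i_k}`, the permutation
`w_{U,i} = w t_{i,i_k} t_{i,i_{k-1}} ⋯ t_{i,i_1}` (and `w_{∅,i} = w`). -/
def wUF {n : ℕ} (w : Equiv.Perm (Fin n)) (i : Fin n) (U : Finset (Fin n)) :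
    Equiv.Perm (Fin n) :=
  ((U.sort (· ≤ ·)).reverse).foldl (fun v j => v * Equiv.swap i j) w


section Aux47
open Equiv Finset
variable {n : ℕ}

/-- the cycle built from swaps with `i`. -/
def cyc (i : Fin n) (L : List (Fin n)) : Equiv.Perm (Fin n) :=
  (L.reverse).foldl (fun v j => v * Equiv.swap i j) 1

lemma foldl_mul (i : Fin n) (L : List (Fin n)) (w v : Equiv.Perm (Fin n)) :
    L.foldl (fun v j => v * Equiv.swap i j) (w * v)
      = w * L.foldl (fun v j => v * Equiv.swap i j) v := by
  induction L generalizing v with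
  | nil => rfl
  | cons a L ih => simp only [List.foldl_cons, mul_assoc, ih]

lemma cyc_nil (i : Fin n) : cyc i [] = 1 := rfl

lemma cyc_cons (i x : Fin n) (L : List (Fin n)) :
    cyc i (x :: L) = cyc i L * Equiv.swap i x := by
  simp only [cyc, List.reverse_cons, List.foldl_append, List.foldl_cons, List.foldl_nil]

lemma wUF_eq (w : Equiv.Perm (Fin n)) (i : Fin n) (U : Finset (Fin n)) :
    wUF w i U = w * cyc i (U.sort (· ≤ ·)) := by
  have := foldl_mul i ((U.sort (· ≤ ·)).reverse) w 1
  simpa [wUF, cyc] using this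

lemma cyc_apply_of_not_mem (i : Fin n) (L : List (Fin n)) {m : Fin n}
    (hm : m ∉ L) (hmi : m ≠ i) : cyc i L m = m := by
  induction L with
  | nil => rfl
  | cons x L ih =>
    rw [cyc_cons, Equiv.Perm.mul_apply, Equiv.swap_apply_of_ne_of_ne hmi (by
      intro h; exact hm (h ▸ List.mem_cons_self)), ih (fun h => hm (List.mem_cons_of_mem _ h))]

lemma cyc_apply_i (i x : Fin n) (L : List (Fin n)) (hnd : (x :: L).Nodup)
    (hi : i ∉ (x :: L)) : cyc i (x :: L) i = x := by
  rw [cyc_cons, Equiv.Perm.mul_apply, Equiv.swap_apply_left]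
  exact cyc_apply_of_not_mem i L (List.Nodup.notMem hnd)
    (fun h => hi (h ▸ List.mem_cons_self))

lemma cyc_apply_getLast (i : Fin n) (L : List (Fin n)) (hL : L ≠ [])
    (hnd : L.Nodup) (hi : i ∉ L) : cyc i L (L.getLast hL) = i := by
  induction L with
  | nil => exact absurd rfl hL
  | cons x L ih =>
    cases L with
    | nil =>
      simp only [List.getLast_singleton]
      rw [cyc_cons, Equiv.Perm.mul_apply, Equiv.swap_apply_right, cyc_nil]; rfl
    | cons y L' =>
      have hne : (y :: L') ≠ [] := by simp
      rw [List.getLast_cons hne, cyc_cons, Equiv.Perm.mul_apply]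
      have hmem : (y :: L').getLast hne ∈ y :: L' := List.getLast_mem hne
      have h1 : (y :: L').getLast hne ≠ i := fun h =>
        hi (h ▸ List.mem_cons_of_mem _ hmem)
      have h2 : (y :: L').getLast hne ≠ x := fun h => by
        have := List.Nodup.notMem hnd
        exact this (h ▸ hmem)
      rw [Equiv.swap_apply_of_ne_of_ne h1 h2]
      exact ih hne (List.Nodup.of_cons hnd) (fun h => hi (List.mem_cons_of_mem _ h))

lemma cyc_apply_middle (i : Fin n) (L1 : List (Fin n)) (b c : Fin n) (L2 : List (Fin n))
    (hnd : (L1 ++ b :: c :: L2).Nodup) (hi : i ∉ (L1 ++ b :: c :: L2)) :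
    cyc i (L1 ++ b :: c :: L2) b = c := by
  induction L1 with
  | nil =>
    simp only [List.nil_append] at *
    rw [cyc_cons, Equiv.Perm.mul_apply, Equiv.swap_apply_right]
    exact cyc_apply_i i c L2 (List.Nodup.of_cons hnd) (fun h => hi (List.mem_cons_of_mem _ h))
  | cons x L1 ih =>
    have hb : b ∈ (L1 ++ b :: c :: L2) := by simp
    have hbx : b ≠ x := fun h => by
      have := (List.nodup_cons.mp hnd).1
      exact this (h ▸ hb)
    have hbi : b ≠ i := fun h => hi (by simp [h])
    rw [List.cons_append, cyc_cons, Equiv.Perm.mul_apply,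
      Equiv.swap_apply_of_ne_of_ne hbi hbx]
    exact ih (List.nodup_cons.mp hnd).2 (fun h => hi (by simp [List.mem_cons] at *; tauto))

lemma swap_indep {α : Type*} [DecidableEq α] {p a x y : α} (h1 : p ≠ x) (h2 : p ≠ y)
    (h3 : a ≠ x) (h4 : a ≠ y) :
    Equiv.swap p a * Equiv.swap x y = Equiv.swap x y * Equiv.swap p a := by
  ext m
  simp only [Equiv.Perm.mul_apply, Equiv.swap_apply_def]
  split_ifs <;> simp_all <;> tauto

lemma swap_braid {α : Type*} [DecidableEq α] {i x a : α} (h1 : i ≠ x) (h2 : i ≠ a)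
    (h3 : x ≠ a) :
    Equiv.swap i a * Equiv.swap i x = Equiv.swap i x * Equiv.swap x a := by
  ext m
  simp only [Equiv.Perm.mul_apply, Equiv.swap_apply_def]
  split_ifs <;> simp_all <;> tauto

lemma cyc_insert (i : Fin n) (a : Fin n) (L1 L2 : List (Fin n)) (hai : a ≠ i)
    (haL : a ∉ L1) (hiL : i ∉ L1) (hnd : L1.Nodup) :
    cyc i (L1 ++ a :: L2)
      = cyc i (L1 ++ L2) * Equiv.swap ((i :: L1).getLast (by simp)) a := by
  induction L1 with
  | nil =>
    simp only [List.nil_append, List.getLast_singleton]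
    exact cyc_cons i a L2
  | cons x L1 ih =>
    have hx_ne_i : x ≠ i := fun h => hiL (by simp [h])
    have hx_ne_a : x ≠ a := fun h => haL (by simp [h])
    rw [List.cons_append, cyc_cons, List.cons_append, cyc_cons,
      ih (fun h => haL (List.mem_cons_of_mem _ h)) (fun h => hiL (List.mem_cons_of_mem _ h))
        (List.Nodup.of_cons hnd)]
    have hgl : (i :: x :: L1).getLast (by simp) =
        (x :: L1).getLast (by simp) := List.getLast_cons (by simp)
    rw [hgl, mul_assoc, mul_assoc]
    congr 1
    cases L1 with
    | nil =>
      simp only [List.getLast_singleton]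
      exact swap_braid (Ne.symm hx_ne_i) (Ne.symm hai) hx_ne_a
    | cons y L1' =>
      have h2 : (y :: L1').getLast (by simp) ∈ y :: L1' := List.getLast_mem (by simp)
      rw [show ((i :: y :: L1').getLast (by simp)) = ((y :: L1').getLast (by simp)) from
          List.getLast_cons (by simp),
        show ((x :: y :: L1').getLast (by simp)) = ((y :: L1').getLast (by simp)) from
          List.getLast_cons (by simp)]
      refine swap_indep ?_ ?_ hai (Ne.symm hx_ne_a)
      · exact fun h => hiL (List.mem_cons_of_mem _ (h ▸ h2))
      · exact fun h => (List.nodup_cons.mp hnd).1 (h ▸ h2)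

lemma val_ne_of_ne {v : Equiv.Perm (Fin n)} {m m' : Fin n} (h : m ≠ m') :
    ((v m : ℕ)) ≠ ((v m' : ℕ)) := by
  intro hc
  exact h (v.injective (Fin.val_injective hc))

/-- Step 1: rank change under a single "increasing" transposition. -/
lemma rk_mul_swap (v : Equiv.Perm (Fin n)) (p a : Fin n) (hpa : (p : ℕ) < a)
    (hv : (v p : ℕ) < v a) (x y : ℕ) :
    rk (v * Equiv.swap p a) x y
      + (if (p : ℕ) < x ∧ x ≤ (a : ℕ) ∧ (v p : ℕ) < y ∧ y ≤ (v a : ℕ) then 1 else 0)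
      = rk v x y := by
  have hpane : p ≠ a := fun h => absurd (congrArg Fin.val h) (Nat.ne_of_lt hpa)
  have expand : ∀ u : Equiv.Perm (Fin n),
      rk u x y = ∑ m : Fin n, (if (m : ℕ) < x ∧ ((u m : ℕ)) < y then 1 else 0) := by
    intro u; rw [rk, Finset.card_filter]
  rw [expand, expand]
  have hmem1 : p ∈ (Finset.univ : Finset (Fin n)) := Finset.mem_univ p
  rw [← Finset.add_sum_erase _ _ hmem1, ← Finset.add_sum_erase _ _ hmem1]
  have hmem2 : a ∈ (Finset.univ : Finset (Fin n)).erase p := by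
    simp [Finset.mem_erase, Ne.symm hpane]
  rw [← Finset.add_sum_erase _ _ hmem2, ← Finset.add_sum_erase _ _ hmem2]
  have hrest : ∀ m ∈ ((Finset.univ : Finset (Fin n)).erase p).erase a,
      (if (m : ℕ) < x ∧ (((v * Equiv.swap p a) m : ℕ)) < y then 1 else 0)
        = (if (m : ℕ) < x ∧ ((v m : ℕ)) < y then 1 else 0) := by
    intro m hm
    simp only [Finset.mem_erase] at hm
    rw [Equiv.Perm.mul_apply, Equiv.swap_apply_of_ne_of_ne hm.2.1 hm.1]
  rw [Finset.sum_congr rfl hrest]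
  have h1 : (v * Equiv.swap p a) p = v a := by
    rw [Equiv.Perm.mul_apply, Equiv.swap_apply_left]
  have h2 : (v * Equiv.swap p a) a = v p := by
    rw [Equiv.Perm.mul_apply, Equiv.swap_apply_right]
  rw [h1, h2]
  have key : ∀ S : ℕ,
      ((if (p : ℕ) < x ∧ ((v a : ℕ)) < y then 1 else 0) +
        ((if (a : ℕ) < x ∧ ((v p : ℕ)) < y then 1 else 0) + S)) +
        (if (p : ℕ) < x ∧ x ≤ (a : ℕ) ∧ (v p : ℕ) < y ∧ y ≤ (v a : ℕ) then 1 else 0)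
      = (if (p : ℕ) < x ∧ ((v p : ℕ)) < y then 1 else 0) +
        ((if (a : ℕ) < x ∧ ((v a : ℕ)) < y then 1 else 0) + S) := by
    intro S; split_ifs <;> omega
  exact key _

lemma card_filter_lt (m2 : Fin n) :
    (Finset.univ.filter (fun m1 : Fin n => m1 < m2)).card = (m2 : ℕ) := by
  rw [show Finset.univ.filter (fun m1 : Fin n => m1 < m2) = Finset.Iio m2 from
    Finset.ext (fun m => by simp [Finset.mem_Iio])]
  simp

lemma len_add_sum_rk (v : Equiv.Perm (Fin n)) :
    len v + ∑ m : Fin n, rk v (m : ℕ) ((v m : ℕ)) = ∑ m : Fin n, (m : ℕ) := by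
  have h1 : len v = ∑ m2 : Fin n,
      (Finset.univ.filter (fun m1 : Fin n => m1 < m2 ∧ v m2 < v m1)).card := by
    rw [len, Finset.card_filter, Fintype.sum_prod_type, Finset.sum_comm]
    refine Finset.sum_congr rfl (fun m2 _ => ?_)
    rw [Finset.card_filter]
  rw [h1, ← Finset.sum_add_distrib]
  refine Finset.sum_congr rfl (fun m2 _ => ?_)
  have h2 : rk v (m2 : ℕ) ((v m2 : ℕ))
      = ((Finset.univ.filter (fun m1 : Fin n => m1 < m2)).filter
          (fun m1 => v m1 < v m2)).card := by
    rw [rk, Finset.filter_filter]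
    rfl
  have h3 : (Finset.univ.filter (fun m1 : Fin n => m1 < m2 ∧ v m2 < v m1)).card
      = ((Finset.univ.filter (fun m1 : Fin n => m1 < m2)).filter
          (fun m1 => ¬ v m1 < v m2)).card := by
    rw [Finset.filter_filter]
    congr 1
    refine Finset.ext (fun m1 => ?_)
    simp only [Finset.mem_filter, Finset.mem_univ, true_and]
    constructor
    · rintro ⟨hlt, hv⟩; exact ⟨hlt, not_lt_of_gt hv⟩
    · rintro ⟨hlt, hv⟩
      refine ⟨hlt, lt_of_le_of_ne (le_of_not_gt hv) ?_⟩
      intro hc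
      exact (Nat.ne_of_lt (Fin.lt_def.mp hlt)) (congrArg Fin.val (v.injective hc)).symm
  rw [h2, h3, ← card_filter_lt (n := n) m2]
  rw [add_comm]
  exact Finset.card_filter_add_card_filter_not _

/-- C': exact length change under an "increasing" transposition. -/
lemma len_mul_swap (v : Equiv.Perm (Fin n)) (p a : Fin n) (hpa : (p : ℕ) < a)
    (hv : (v p : ℕ) < v a) :
    len (v * Equiv.swap p a) = len v + 1 +
      2 * (Finset.univ.filter (fun m : Fin n =>
        (p : ℕ) < m ∧ (m : ℕ) < a ∧ (v p : ℕ) < (v m : ℕ) ∧ (v m : ℕ) < (v a : ℕ))).card := by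
  classical
  set v' := v * Equiv.swap p a with hv'
  have hpane : p ≠ a := fun h => absurd (congrArg Fin.val h) (Nat.ne_of_lt hpa)
  have hvpa : v' p = v a := by rw [hv', Equiv.Perm.mul_apply, Equiv.swap_apply_left]
  have hvap : v' a = v p := by rw [hv', Equiv.Perm.mul_apply, Equiv.swap_apply_right]
  set K := (Finset.univ.filter (fun m : Fin n =>
        (p : ℕ) < m ∧ (m : ℕ) < a ∧ (v p : ℕ) < (v m : ℕ) ∧ (v m : ℕ) < (v a : ℕ))).card with hK
  set K1 := (Finset.univ.filter (fun m : Fin n =>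
        (m : ℕ) < p ∧ (v p : ℕ) < (v m : ℕ) ∧ (v m : ℕ) < (v a : ℕ))).card with hK1
  -- rank at the two special points is unchanged
  have e1 : rk v' (p : ℕ) ((v a : ℕ)) = rk v (p : ℕ) ((v a : ℕ)) := by
    have := rk_mul_swap v p a hpa hv (p : ℕ) ((v a : ℕ))
    rw [← hv', if_neg (by omega)] at this
    omega
  have e2 : rk v' (a : ℕ) ((v p : ℕ)) = rk v (a : ℕ) ((v p : ℕ)) := by
    have := rk_mul_swap v p a hpa hv (a : ℕ) ((v p : ℕ))
    rw [← hv', if_neg (by omega)] at this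
    omega
  -- c1
  have c1 : rk v (p : ℕ) ((v a : ℕ)) = rk v (p : ℕ) ((v p : ℕ)) + K1 := by
    have hsplit := Finset.card_filter_add_card_filter_not
      (s := Finset.univ.filter (fun m : Fin n => (m : ℕ) < p ∧ (v m : ℕ) < (v a : ℕ)))
      (fun m => (v m : ℕ) < (v p : ℕ))
    rw [Finset.filter_filter, Finset.filter_filter] at hsplit
    have hq1 : Finset.univ.filter
        (fun m : Fin n => ((m : ℕ) < p ∧ (v m : ℕ) < (v a : ℕ)) ∧ (v m : ℕ) < (v p : ℕ))
        = Finset.univ.filter (fun m : Fin n => (m : ℕ) < p ∧ (v m : ℕ) < (v p : ℕ)) :=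
      Finset.ext (fun m => by
        simp only [Finset.mem_filter, Finset.mem_univ, true_and]; omega)
    have hq2 : Finset.univ.filter
        (fun m : Fin n => ((m : ℕ) < p ∧ (v m : ℕ) < (v a : ℕ)) ∧ ¬ (v m : ℕ) < (v p : ℕ))
        = Finset.univ.filter
            (fun m : Fin n => (m : ℕ) < p ∧ (v p : ℕ) < (v m : ℕ) ∧ (v m : ℕ) < (v a : ℕ)) :=
      Finset.ext (fun m => by
        simp only [Finset.mem_filter, Finset.mem_univ, true_and]
        have i1 : (m : ℕ) = (p : ℕ) → (v m : ℕ) = (v p : ℕ) := fun h =>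
          congrArg (fun z => ((v z : ℕ))) (Fin.val_injective h)
        have i2 : (v m : ℕ) = (v p : ℕ) → (m : ℕ) = (p : ℕ) := fun h =>
          congrArg Fin.val (v.injective (Fin.val_injective h))
        omega)
    rw [hq1, hq2] at hsplit
    rw [rk, rk]
    omega
  -- c2
  have c2 : rk v (a : ℕ) ((v a : ℕ)) = rk v (a : ℕ) ((v p : ℕ)) + (K1 + K + 1) := by
    have hsplit := Finset.card_filter_add_card_filter_not
      (s := Finset.univ.filter (fun m : Fin n => (m : ℕ) < a ∧ (v m : ℕ) < (v a : ℕ)))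
      (fun m => (v m : ℕ) < (v p : ℕ))
    rw [Finset.filter_filter, Finset.filter_filter] at hsplit
    have hq1 : Finset.univ.filter
        (fun m : Fin n => ((m : ℕ) < a ∧ (v m : ℕ) < (v a : ℕ)) ∧ (v m : ℕ) < (v p : ℕ))
        = Finset.univ.filter (fun m : Fin n => (m : ℕ) < a ∧ (v m : ℕ) < (v p : ℕ)) :=
      Finset.ext (fun m => by
        simp only [Finset.mem_filter, Finset.mem_univ, true_and]; omega)
    set B := Finset.univ.filter
        (fun m : Fin n => ((m : ℕ) < a ∧ (v m : ℕ) < (v a : ℕ)) ∧ ¬ (v m : ℕ) < (v p : ℕ))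
      with hB
    have hpB : p ∈ B := by
      simp only [hB, Finset.mem_filter, Finset.mem_univ, true_and]
      omega
    have hBerase : B.erase p = Finset.univ.filter
        (fun m : Fin n => (m : ℕ) < a ∧ (v p : ℕ) < (v m : ℕ) ∧ (v m : ℕ) < (v a : ℕ)) := by
      rw [← Finset.filter_ne]
      refine Finset.ext (fun m => ?_)
      simp only [hB, Finset.mem_filter, Finset.mem_univ, true_and, ne_eq, Fin.ne_iff_vne]
      have i1 : (p : ℕ) = (m : ℕ) → (v p : ℕ) = (v m : ℕ) := fun h =>
        congrArg (fun z => ((v z : ℕ))) (Fin.val_injective h)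
      have i2 : (v p : ℕ) = (v m : ℕ) → (p : ℕ) = (m : ℕ) := fun h =>
        congrArg Fin.val (v.injective (Fin.val_injective h))
      omega
    have hcardB : B.card = K1 + K + 1 := by
      have herase : B.card = (B.erase p).card + 1 := by
        rw [Finset.card_erase_of_mem hpB]
        have : 1 ≤ B.card := Finset.card_pos.mpr ⟨p, hpB⟩
        omega
      have hsplit2 := Finset.card_filter_add_card_filter_not
        (s := Finset.univ.filter
          (fun m : Fin n => (m : ℕ) < a ∧ (v p : ℕ) < (v m : ℕ) ∧ (v m : ℕ) < (v a : ℕ)))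
        (fun m => (m : ℕ) < (p : ℕ))
      rw [Finset.filter_filter, Finset.filter_filter] at hsplit2
      have hr1 : Finset.univ.filter
          (fun m : Fin n => ((m : ℕ) < a ∧ (v p : ℕ) < (v m : ℕ) ∧ (v m : ℕ) < (v a : ℕ))
            ∧ (m : ℕ) < (p : ℕ))
          = Finset.univ.filter
              (fun m : Fin n => (m : ℕ) < p ∧ (v p : ℕ) < (v m : ℕ) ∧ (v m : ℕ) < (v a : ℕ)) :=
        Finset.ext (fun m => by
          simp only [Finset.mem_filter, Finset.mem_univ, true_and]; omega)
      have hr2 : Finset.univ.filter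
          (fun m : Fin n => ((m : ℕ) < a ∧ (v p : ℕ) < (v m : ℕ) ∧ (v m : ℕ) < (v a : ℕ))
            ∧ ¬ (m : ℕ) < (p : ℕ))
          = Finset.univ.filter (fun m : Fin n =>
              (p : ℕ) < m ∧ (m : ℕ) < a ∧ (v p : ℕ) < (v m : ℕ) ∧ (v m : ℕ) < (v a : ℕ)) :=
        Finset.ext (fun m => by
          simp only [Finset.mem_filter, Finset.mem_univ, true_and]
          have i1 : (p : ℕ) = (m : ℕ) → (v p : ℕ) = (v m : ℕ) := fun h =>
            congrArg (fun z => ((v z : ℕ))) (Fin.val_injective h)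
          have i2 : (v p : ℕ) = (v m : ℕ) → (p : ℕ) = (m : ℕ) := fun h =>
            congrArg Fin.val (v.injective (Fin.val_injective h))
          omega)
      rw [hr1, hr2] at hsplit2
      rw [herase, hBerase]
      omega
    rw [hq1] at hsplit
    rw [rk, rk]
    omega
  -- the two global sum identities
  have T1 := len_add_sum_rk v
  have T2 := len_add_sum_rk v'
  -- split the sums at p and a
  have hmem1 : p ∈ (Finset.univ : Finset (Fin n)) := Finset.mem_univ p
  have hmem2 : a ∈ (Finset.univ : Finset (Fin n)).erase p := by
    simp [Finset.mem_erase, Ne.symm hpane]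
  set E := ((Finset.univ : Finset (Fin n)).erase p).erase a with hE
  have hs1 : ∑ m : Fin n, rk v (m : ℕ) ((v m : ℕ))
      = rk v (p : ℕ) ((v p : ℕ)) + (rk v (a : ℕ) ((v a : ℕ))
          + ∑ m ∈ E, rk v (m : ℕ) ((v m : ℕ))) := by
    rw [← Finset.add_sum_erase _ _ hmem1, ← Finset.add_sum_erase _ _ hmem2]
  have hs2 : ∑ m : Fin n, rk v' (m : ℕ) ((v' m : ℕ))
      = rk v (p : ℕ) ((v a : ℕ)) + (rk v (a : ℕ) ((v p : ℕ))
          + ∑ m ∈ E, rk v' (m : ℕ) ((v' m : ℕ))) := by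
    rw [← Finset.add_sum_erase _ _ hmem1, ← Finset.add_sum_erase _ _ hmem2, hvpa, hvap, e1, e2]
  -- relate the two partial sums
  have hE3 : ∑ m ∈ E, rk v' (m : ℕ) ((v' m : ℕ))
      + ∑ m ∈ E, (if (p : ℕ) < (m : ℕ) ∧ (m : ℕ) ≤ (a : ℕ)
          ∧ (v p : ℕ) < (v m : ℕ) ∧ (v m : ℕ) ≤ (v a : ℕ) then 1 else 0)
      = ∑ m ∈ E, rk v (m : ℕ) ((v m : ℕ)) := by
    rw [← Finset.sum_add_distrib]
    refine Finset.sum_congr rfl (fun m hm => ?_)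
    simp only [hE, Finset.mem_erase] at hm
    have hv'm : v' m = v m := by
      rw [hv', Equiv.Perm.mul_apply, Equiv.swap_apply_of_ne_of_ne hm.2.1 hm.1]
    rw [hv'm]
    have := rk_mul_swap v p a hpa hv (m : ℕ) ((v m : ℕ))
    rw [← hv'] at this
    exact this
  have hKsum : ∑ m ∈ E, (if (p : ℕ) < (m : ℕ) ∧ (m : ℕ) ≤ (a : ℕ)
          ∧ (v p : ℕ) < (v m : ℕ) ∧ (v m : ℕ) ≤ (v a : ℕ) then 1 else 0) = K := by
    rw [hK, Finset.card_filter]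
    rw [← Finset.add_sum_erase _ (fun m : Fin n => if (p : ℕ) < m ∧ (m : ℕ) < a
        ∧ (v p : ℕ) < (v m : ℕ) ∧ (v m : ℕ) < (v a : ℕ) then (1:ℕ) else 0) hmem1,
      ← Finset.add_sum_erase _ _ hmem2]
    rw [if_neg (by omega), if_neg (by omega)]
    simp only [zero_add, ← hE]
    refine (Finset.sum_congr rfl (fun m hm => ?_))
    simp only [hE, Finset.mem_erase] at hm
    have h1 : (m : ℕ) ≠ (a : ℕ) := fun h => hm.1 (Fin.val_injective h)
    have h2 : (v m : ℕ) ≠ (v a : ℕ) := val_ne_of_ne hm.1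
    have h3 : (v m : ℕ) ≠ (v p : ℕ) := val_ne_of_ne hm.2.1
    congr 1
    have : ((p : ℕ) < m ∧ (m : ℕ) ≤ (a : ℕ)
          ∧ (v p : ℕ) < (v m : ℕ) ∧ (v m : ℕ) ≤ (v a : ℕ))
        ↔ ((p : ℕ) < m ∧ (m : ℕ) < a ∧ (v p : ℕ) < (v m : ℕ) ∧ (v m : ℕ) < (v a : ℕ)) := by
      omega
    rw [this]
  rw [hs1] at T1
  rw [hs2] at T2
  omega

/-- One covering step decreases the rank function pointwise. -/
lemma rk_le_of_step {u c : Equiv.Perm (Fin n)}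
    (h : (∃ t : Equiv.Perm (Fin n), t.IsSwap ∧ c = u * t) ∧ len c = len u + 1)
    (x y : ℕ) : rk c x y ≤ rk u x y := by
  obtain ⟨⟨t, ⟨s, s', hne, rfl⟩, rfl⟩, hlen⟩ := h
  -- wlog (s : ℕ) < s'
  rcases lt_or_gt_of_ne (fun h : (s : ℕ) = (s' : ℕ) => hne (Fin.val_injective h)) with hss | hss
  · rcases lt_or_gt_of_ne (val_ne_of_ne (v := u) hne) with hv | hv
    · have := rk_mul_swap u s s' hss hv x y
      omega
    · exfalso
      set c := u * Equiv.swap s s' with hc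
      have hcs : (c s : ℕ) = (u s' : ℕ) := by
        rw [hc, Equiv.Perm.mul_apply, Equiv.swap_apply_left]
      have hcs' : (c s' : ℕ) = (u s : ℕ) := by
        rw [hc, Equiv.Perm.mul_apply, Equiv.swap_apply_right]
      have hcv : (c s : ℕ) < (c s' : ℕ) := by omega
      have := len_mul_swap c s s' hss hcv
      have hcc : c * Equiv.swap s s' = u := by
        rw [hc, mul_assoc, Equiv.swap_mul_self, mul_one]
      rw [hcc] at this
      omega
  · rw [Equiv.swap_comm] at hlen ⊢
    rcases lt_or_gt_of_ne (val_ne_of_ne (v := u) (Ne.symm hne)) with hv | hv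
    · have := rk_mul_swap u s' s hss hv x y
      omega
    · exfalso
      set c := u * Equiv.swap s' s with hc
      have hcs : (c s' : ℕ) = (u s : ℕ) := by
        rw [hc, Equiv.Perm.mul_apply, Equiv.swap_apply_left]
      have hcs' : (c s : ℕ) = (u s' : ℕ) := by
        rw [hc, Equiv.Perm.mul_apply, Equiv.swap_apply_right]
      have hcv : (c s' : ℕ) < (c s : ℕ) := by omega
      have := len_mul_swap c s' s hss hcv
      have hcc : c * Equiv.swap s' s = u := by
        rw [hc, mul_assoc, Equiv.swap_mul_self, mul_one]
      rw [hcc] at this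
      omega

lemma rk_le_of_bruhatLE {u v : Equiv.Perm (Fin n)} (h : bruhatLE u v) (x y : ℕ) :
    rk v x y ≤ rk u x y := by
  induction h with
  | refl => exact le_refl _
  | tail _ hstep ih => exact le_trans (rk_le_of_step hstep x y) ih

lemma nbr_lt {w : Equiv.Perm (Fin n)} {i a : Fin n} (h : isNbrF w i a) :
    (i : ℕ) < a ∧ (w i : ℕ) < w a := by
  obtain ⟨h1, h2, h3, -⟩ := h
  have hne : a ≠ i := fun hc => h3 (by rw [hc])
  have : (i : ℕ) ≠ (a : ℕ) := fun hc => hne (Fin.val_injective hc).symm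
  have hle : (i : ℕ) ≤ a := h1
  have hle2 : (w i : ℕ) ≤ w a := h2
  have : (w i : ℕ) ≠ (w a : ℕ) := val_ne_of_ne (Ne.symm hne)
  omega

lemma nbr_anti {w : Equiv.Perm (Fin n)} {i a b : Fin n} (ha : isNbrF w i a)
    (hb : isNbrF w i b) (hab : (a : ℕ) < b) : (w b : ℕ) < w a := by
  have h1 := nbr_lt ha
  have h2 := nbr_lt hb
  have hne : a ≠ b := fun hc => (Nat.ne_of_lt hab) (congrArg Fin.val hc)
  have hvne : (w a : ℕ) ≠ (w b : ℕ) := val_ne_of_ne hne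
  by_contra hc
  push_neg at hc
  have := hb.2.2.2 a (Fin.le_def.mpr (le_of_lt h1.1)) (Fin.le_def.mpr (le_of_lt hab))
    (Fin.le_def.mpr (le_of_lt h1.2)) (Fin.le_def.mpr (by omega))
  rcases this with h | h
  · exact absurd (congrArg Fin.val h) (by omega)
  · exact hne h

lemma wUF_apply_not_mem (w : Equiv.Perm (Fin n)) (i : Fin n) (V : Finset (Fin n))
    {m : Fin n} (hm : m ∉ V) (hmi : m ≠ i) : wUF w i V m = w m := by
  rw [wUF_eq, Equiv.Perm.mul_apply,
    cyc_apply_of_not_mem i _ (by simpa using hm) hmi]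

lemma sorted_le_getLast {α : Type*} [Preorder α] :
    ∀ (l : List α) (_ : List.Pairwise (· ≤ ·) l) (x : α) (_ : x ∈ l) (hne : l ≠ []),
      x ≤ l.getLast hne
  | [], _, x, hx, _ => absurd hx (List.not_mem_nil)
  | [c], _, x, hx, _ => by
      rcases List.mem_singleton.mp hx with rfl
      simp
  | c :: d :: l', hl, x, hx, _ => by
      rw [List.getLast_cons (by simp)]
      rcases List.mem_cons.mp hx with rfl | hx'
      · exact List.rel_of_pairwise_cons hl (List.getLast_mem (by simp))
      · exact sorted_le_getLast (d :: l') hl.of_cons x hx' (by simp)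

lemma getLast_cons_eq_getLastD {α : Type*} (d : α) (l : List α) :
    (d :: l).getLast (by simp) = l.getLastD d := by
  induction l generalizing d with
  | nil => rfl
  | cons x l ih => rw [List.getLast_cons (by simp), ih x, List.getLastD_cons]

lemma step_insert (w : Equiv.Perm (Fin n)) (i : Fin n) (V : Finset (Fin n)) (a : Fin n)
    (hV : ∀ b ∈ V, isNbrF w i b) (ha : isNbrF w i a) (haV : a ∉ V) :
    ∃ p : Fin n, (p : ℕ) < a ∧
      ((wUF w i V) p : ℕ) < ((wUF w i V) a : ℕ) ∧
      wUF w i (insert a V) = wUF w i V * Equiv.swap p a ∧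
      (∀ m : Fin n, (p : ℕ) < m → (m : ℕ) < a →
        ¬ (((wUF w i V) p : ℕ) < ((wUF w i V) m : ℕ)
            ∧ ((wUF w i V) m : ℕ) < ((wUF w i V) a : ℕ))) ∧
      (p = i ∨ p ∈ V) ∧
      (∀ b ∈ V, (b : ℕ) < (a : ℕ) → (b : ℕ) ≤ (p : ℕ)) ∧
      ((∀ b ∈ V, (b : ℕ) < (a : ℕ)) → (wUF w i V) p = w i) := by
  classical
  have hai : a ≠ i := fun hc => (Nat.ne_of_lt (nbr_lt ha).1) (congrArg Fin.val hc).symm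
  set M := V.sort (· ≤ ·) with hM
  have hMnd : M.Nodup := Finset.sort_nodup _ _
  have hMsorted : List.Pairwise (· ≤ ·) M := Finset.pairwise_sort _ _
  have hMmem : ∀ {x : Fin n}, x ∈ M ↔ x ∈ V := fun {x} => Finset.mem_sort _
  have hiM : i ∉ M := fun hc =>
    (Nat.ne_of_lt (nbr_lt (hV i (hMmem.mp hc))).1) rfl
  set P : Fin n → Bool := fun x => decide (x < a) with hP
  obtain ⟨L1, hL1⟩ : ∃ L1, L1 = M.takeWhile P := ⟨_, rfl⟩
  obtain ⟨L2, hL2⟩ : ∃ L2, L2 = M.dropWhile P := ⟨_, rfl⟩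
  have hsplit : L1 ++ L2 = M := by rw [hL1, hL2]; exact List.takeWhile_append_dropWhile
  have hL1sub : L1.Sublist M := by rw [hL1]; exact List.takeWhile_sublist P
  have hL2sub : L2.Sublist M := by rw [hL2]; exact List.dropWhile_sublist P
  have hL1mem : ∀ x ∈ L1, (x : ℕ) < a := fun x hx => by
    have := List.mem_takeWhile_imp (hL1 ▸ hx)
    simpa [hP] using this
  have hL2mem : ∀ x ∈ L2, (a : ℕ) < x := by
    intro x hx
    have hL2sorted : List.Pairwise (· ≤ ·) L2 := hMsorted.sublist hL2sub
    have hxV : x ∈ V := hMmem.mp (hL2sub.mem hx)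
    have hxa : x ≠ a := fun hc => haV (hc ▸ hxV)
    cases hL2' : L2 with
    | nil => rw [hL2'] at hx; exact absurd hx (List.not_mem_nil)
    | cons c L2' =>
      have hne : L2 ≠ [] := by rw [hL2']; simp
      have hne' : M.dropWhile P ≠ [] := by rw [← hL2]; exact hne
      have hhead : P ((M.dropWhile P).head hne') = false := List.head_dropWhile_not P hne'
      have hceq : (M.dropWhile P).head hne' = c := by
        have h1 : (M.dropWhile P).head? = some c := by rw [← hL2, hL2']; rfl
        rw [List.head?_eq_head hne'] at h1
        exact Option.some.inj h1
      rw [hceq] at hhead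
      have hca : ¬ c < a := by simpa [hP] using hhead
      have hcx : c ≤ x := by
        rw [hL2'] at hx
        rcases List.mem_cons.mp hx with rfl | hx'
        · exact le_refl _
        · exact List.rel_of_pairwise_cons (hL2' ▸ hL2sorted) hx'
      have h0 : (a : ℕ) ≤ c := Fin.le_def.mp (le_of_not_gt hca)
      have h2 : (c : ℕ) ≤ x := Fin.le_def.mp hcx
      have h3 : (a : ℕ) ≠ (x : ℕ) := fun hc => hxa (Fin.val_injective hc).symm
      omega
  have hL1nd : L1.Nodup := hMnd.sublist hL1sub
  have haL1 : a ∉ L1 := fun hc => haV (hMmem.mp (hL1sub.mem hc))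
  have hiL1 : i ∉ L1 := fun hc => hiM (hL1sub.mem hc)
  -- the sorted form of the inserted set
  have hsort_ins : (insert a V).sort (· ≤ ·) = L1 ++ a :: L2 := by
    refine (fun h1 h2 => List.Perm.eq_of_pairwise' (Finset.pairwise_sort _ _) h2 h1) ?_ ?_
    · have e1 : ((insert a V).sort (· ≤ ·)).Perm (insert a V).toList :=
        Finset.sort_perm_toList _ _
      have e2 : ((insert a V).toList).Perm (a :: V.toList) := Finset.toList_insert haV
      have e3 : (L1 ++ a :: L2).Perm (a :: V.toList) := by
        refine List.Perm.trans List.perm_middle ?_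
        refine List.Perm.cons a ?_
        rw [hsplit, hM]
        exact Finset.sort_perm_toList _ _
      exact e1.trans (e2.trans e3.symm)
    · rw [List.pairwise_append]
      refine ⟨hMsorted.sublist hL1sub, ?_, ?_⟩
      · refine List.Pairwise.cons ?_ (hMsorted.sublist hL2sub)
        intro x hx
        exact Fin.le_def.mpr (le_of_lt (hL2mem x hx))
      · intro x hx y hy
        have hxa := hL1mem x hx
        rcases List.mem_cons.mp hy with rfl | hy'
        · exact Fin.le_def.mpr (le_of_lt hxa)
        · have := hL2mem y hy'
          exact Fin.le_def.mpr (by omega)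
  obtain ⟨p, hp⟩ : ∃ p : Fin n, p = (i :: L1).getLast (by simp) := ⟨_, rfl⟩
  refine ⟨p, ?_⟩
  set v := wUF w i V with hv
  -- basic facts about p
  have hp' : p = L1.getLastD i := by rw [hp]; exact getLast_cons_eq_getLastD i L1
  have hpfact : (p = i ∧ L1 = []) ∨ (p ∈ L1 ∧ ∀ x ∈ L1, x ≤ p) := by
    rcases List.eq_nil_or_concat L1 with hL1e | ⟨L', b, hL1e⟩
    · left
      refine ⟨?_, hL1e⟩
      rw [hp', hL1e]
      rfl
    · right
      rw [List.concat_eq_append] at hL1e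
      have hpb : p = b := by rw [hp', hL1e, List.getLastD_concat]
      have hbmem : b ∈ L1 := by rw [hL1e]; simp
      refine ⟨hpb ▸ hbmem, ?_⟩
      intro x hx
      have hgl : L1.getLast (List.ne_nil_of_mem hbmem) = b := by
        rw [show L1.getLast (List.ne_nil_of_mem hbmem)
            = (L' ++ [b]).getLast (by simp) from by congr 1,
          List.getLast_concat]
      rw [hpb, ← hgl]
      exact sorted_le_getLast L1 (hMsorted.sublist hL1sub) x hx _
  have hpi : p = i ∨ p ∈ V := by
    rcases hpfact with ⟨h1, -⟩ | ⟨h1, -⟩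
    · exact Or.inl h1
    · exact Or.inr (hMmem.mp (hL1sub.mem h1))
  have hple : (i : ℕ) ≤ p := by
    rcases hpi with rfl | hpV
    · exact le_refl _
    · exact le_of_lt (nbr_lt (hV p hpV)).1
  have h1 : (p : ℕ) < a := by
    rcases hpfact with ⟨rfl, -⟩ | ⟨h1', -⟩
    · exact (nbr_lt ha).1
    · exact hL1mem p h1'
  -- the value of v at p
  have hva : v a = w a := wUF_apply_not_mem w i V haV hai
  have hvp : ∃ z : Fin n, v p = w z ∧ (z = i ∨ (z ∈ V ∧ (a : ℕ) < z))
      ∧ (L2 = [] → z = i) := by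
    have hvM : ∀ m : Fin n, v m = w (cyc i M m) := fun m => by
      rw [hv, wUF_eq, ← hM]; rfl
    rcases hpfact with ⟨hpeq, hL1e⟩ | ⟨hpL1, -⟩
    · -- p = i, L1 = []
      cases hL2' : L2 with
      | nil =>
        refine ⟨i, ?_, Or.inl rfl, fun _ => rfl⟩
        have hMnil : M = [] := by rw [← hsplit, hL1e, hL2']; rfl
        rw [hvM, hMnil, cyc_nil, hpeq]; rfl
      | cons c L2' =>
        have hMc : M = c :: L2' := by rw [← hsplit, hL1e, hL2']; rfl
        refine ⟨c, ?_, Or.inr ⟨hMmem.mp (by rw [hMc]; exact List.mem_cons_self),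
          hL2mem c (by rw [hL2']; exact List.mem_cons_self)⟩, by
            intro hcon; exact absurd hcon (by simp)⟩
        rw [hvM, hpeq, hMc, cyc_apply_i i c L2' (hMc ▸ hMnd) (hMc ▸ hiM)]
    · -- p ∈ L1
      have hL1ne : L1 ≠ [] := List.ne_nil_of_mem hpL1
      have hpgl : p = L1.getLast hL1ne := by
        rw [hp]; exact List.getLast_cons hL1ne
      cases hL2' : L2 with
      | nil =>
        have hML1 : M = L1 := by rw [← hsplit, hL2']; simp
        refine ⟨i, ?_, Or.inl rfl, fun _ => rfl⟩
        rw [hvM]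
        have hMne : M ≠ [] := by rw [hML1]; exact hL1ne
        have hpglM : p = M.getLast hMne := by
          rw [hpgl]
          congr 1
          rw [hML1]
        rw [hpglM, cyc_apply_getLast i M hMne hMnd hiM]
      | cons c L2' =>
        have hcV : c ∈ V := hMmem.mp (hL2sub.mem (by rw [hL2']; exact List.mem_cons_self))
        have hca : (a : ℕ) < c := hL2mem c (by rw [hL2']; exact List.mem_cons_self)
        refine ⟨c, ?_, Or.inr ⟨hcV, hca⟩, by
          intro hcon; exact absurd hcon (by simp)⟩
        rw [hvM]
        have hMdecomp : M = L1.dropLast ++ p :: c :: L2' := by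
          rw [← hsplit, hL2']
          rw [show L1 = L1.dropLast ++ [p] from by
            rw [hpgl]; exact (List.dropLast_append_getLast hL1ne).symm]
          simp
        rw [hMdecomp, cyc_apply_middle i _ p c L2' (hMdecomp ▸ hMnd) (hMdecomp ▸ hiM)]
  obtain ⟨z, hvpz, hz, hzL2⟩ := hvp
  have hq1 : (v p : ℕ) < (w a : ℕ) := by
    rw [hvpz]
    rcases hz with rfl | ⟨hzV, hza⟩
    · exact (nbr_lt ha).2
    · exact nbr_anti ha (hV z hzV) hza
  have hq2 : (w i : ℕ) ≤ (v p : ℕ) := by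
    rw [hvpz]
    rcases hz with rfl | ⟨hzV, hza⟩
    · exact le_refl _
    · exact le_of_lt (nbr_lt (hV z hzV)).2
  have h2 : (v p : ℕ) < (v a : ℕ) := by rw [hva]; exact hq1
  have h6 : ∀ b ∈ V, (b : ℕ) < (a : ℕ) → (b : ℕ) ≤ (p : ℕ) := by
    intro b hbV hba
    have hbM : b ∈ M := hMmem.mpr hbV
    have hbL1 : b ∈ L1 := by
      rcases List.mem_append.mp (by rw [hsplit]; exact hbM : b ∈ L1 ++ L2) with h | h
      · exact h
      · exact absurd (hL2mem b h) (by omega)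
    rcases hpfact with ⟨-, hL1e⟩ | ⟨-, hmax⟩
    · rw [hL1e] at hbL1; exact absurd hbL1 (List.not_mem_nil)
    · exact Fin.le_def.mp (hmax b hbL1)
  refine ⟨h1, h2, ?_, ?_, hpi, h6, ?_⟩
  · -- the product formula
    rw [wUF_eq, hsort_ins, cyc_insert i a L1 L2 hai haL1 hiL1 hL1nd,
      show ((i :: L1).getLast (by simp)) = p from hp.symm, hv, wUF_eq,
      ← hM, ← hsplit, mul_assoc]
  · -- middle emptiness
    intro m hpm hma ⟨hc1, hc2⟩
    have hmi : m ≠ i := fun hc => by rw [hc] at hpm; omega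
    have hmV : m ∉ V := by
      intro hmV
      have := h6 m hmV hma
      omega
    have hvm : v m = w m := wUF_apply_not_mem w i V hmV hmi
    rw [hvm] at hc1 hc2
    rw [hva] at hc2
    have hwi : (w i : ℕ) < w m := by omega
    have := ha.2.2.2 m (Fin.le_def.mpr (by omega)) (Fin.le_def.mpr (by omega))
      (Fin.le_def.mpr (by omega)) (Fin.le_def.mpr (by omega))
    rcases this with h | h
    · exact hmi h
    · rw [h] at hma; omega
  · -- if a is above everything
    intro hall
    have hL2nil : L2 = [] := by
      cases hL2' : L2 with
      | nil => rfl
      | cons c L2' =>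
        have hcV : c ∈ V := hMmem.mp (hL2sub.mem (by rw [hL2']; exact List.mem_cons_self))
        have := hall c hcV
        have := hL2mem c (by rw [hL2']; exact List.mem_cons_self)
        omega
    rw [hvpz, hzL2 hL2nil]

lemma wUF_empty (w : Equiv.Perm (Fin n)) (i : Fin n) : wUF w i (∅ : Finset (Fin n)) = w := by
  simp [wUF, Finset.sort_empty]

lemma rk_wUF (w : Equiv.Perm (Fin n)) (i : Fin n) (V : Finset (Fin n))
    (hV : ∀ b ∈ V, isNbrF w i b) (x y : ℕ) :
    rk (wUF w i V) x y
      + (if ∃ j ∈ V, (i : ℕ) < x ∧ x ≤ (j : ℕ) ∧ (w i : ℕ) < y ∧ y ≤ (w j : ℕ)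
          then 1 else 0)
      = rk w x y := by
  classical
  revert hV
  induction V using Finset.induction_on_max with
  | empty =>
    intro _
    rw [wUF_empty, if_neg (by simp)]
    omega
  | insert a s hlt ih =>
    intro hV
    have haV : a ∉ s := fun hc => absurd (hlt a hc) (lt_irrefl a)
    have hVs : ∀ b ∈ s, isNbrF w i b := fun b hb =>
      hV b (Finset.mem_insert_of_mem hb)
    have hna : isNbrF w i a := hV a (Finset.mem_insert_self a s)
    obtain ⟨p, h1, h2, h3, h4, h5, h6, h7⟩ := step_insert w i s a hVs hna haV
    have hlt' : ∀ b ∈ s, (b : ℕ) < (a : ℕ) := fun b hb => Fin.lt_def.mp (hlt b hb)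
    have hvp : (wUF w i s) p = w i := h7 hlt'
    have hva : (wUF w i s) a = w a := wUF_apply_not_mem w i s haV
      (fun hc => (Nat.ne_of_lt (nbr_lt hna).1) (congrArg Fin.val hc).symm)
    have hip : (i : ℕ) ≤ p := by
      rcases h5 with rfl | hpV
      · exact le_refl _
      · exact le_of_lt (nbr_lt (hVs p hpV)).1
    have hstep := rk_mul_swap (wUF w i s) p a h1 h2 x y
    rw [← h3, hvp, hva] at hstep
    have hDS := ih hVs
    have hind : (if ∃ j ∈ insert a s,
          (i : ℕ) < x ∧ x ≤ (j : ℕ) ∧ (w i : ℕ) < y ∧ y ≤ (w j : ℕ) then 1 else 0)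
        = (if ∃ j ∈ s, (i : ℕ) < x ∧ x ≤ (j : ℕ) ∧ (w i : ℕ) < y ∧ y ≤ (w j : ℕ)
            then 1 else 0)
          + (if (p : ℕ) < x ∧ x ≤ (a : ℕ) ∧ (w i : ℕ) < y ∧ y ≤ (w a : ℕ)
              then 1 else 0) := by
      by_cases hbr : (p : ℕ) < x ∧ x ≤ (a : ℕ) ∧ (w i : ℕ) < y ∧ y ≤ (w a : ℕ)
      · rw [if_pos hbr]
        have hDs0 : ¬ ∃ j ∈ s, (i : ℕ) < x ∧ x ≤ (j : ℕ) ∧ (w i : ℕ) < y ∧ y ≤ (w j : ℕ) := by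
          rintro ⟨j, hjs, -, hxj, -, -⟩
          have := h6 j hjs (hlt' j hjs)
          omega
        rw [if_neg hDs0, if_pos ⟨a, Finset.mem_insert_self a s, by omega, by omega,
          by omega, by omega⟩]
      · rw [if_neg hbr]
        by_cases hDs : ∃ j ∈ s, (i : ℕ) < x ∧ x ≤ (j : ℕ) ∧ (w i : ℕ) < y ∧ y ≤ (w j : ℕ)
        · obtain ⟨j, hjs, hC⟩ := hDs
          rw [if_pos ⟨j, Finset.mem_insert_of_mem hjs, hC⟩,
            if_pos ⟨j, hjs, hC⟩]
        · have hnotins : ¬ ∃ j ∈ insert a s,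
              (i : ℕ) < x ∧ x ≤ (j : ℕ) ∧ (w i : ℕ) < y ∧ y ≤ (w j : ℕ) := by
            rintro ⟨j, hjmem, hC⟩
            rcases Finset.mem_insert.mp hjmem with rfl | hjs
            · have hxp : ¬ (p : ℕ) < x := fun hpx =>
                hbr ⟨hpx, hC.2.1, hC.2.2.1, hC.2.2.2⟩
              rcases h5 with rfl | hpV
              · omega
              · refine hDs ⟨p, hpV, hC.1, by omega, hC.2.2.1, ?_⟩
                have := nbr_anti (hVs p hpV) hna h1
                omega
            · exact hDs ⟨j, hjs, hC⟩
          rw [if_neg hDs, if_neg hnotins]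
    rw [hind]
    omega

lemma bruhat_chain (w : Equiv.Perm (Fin n)) (i : Fin n) (U' : Finset (Fin n))
    (hU' : ∀ a ∈ U', isNbrF w i a) :
    ∀ (k : ℕ) (V : Finset (Fin n)), V ⊆ U' → (U' \ V).card = k →
      bruhatLE (wUF w i V) (wUF w i U') := by
  classical
  intro k
  induction k with
  | zero =>
    intro V hVU hcard
    have : U' \ V = ∅ := Finset.card_eq_zero.mp hcard
    have hUV : U' ⊆ V := Finset.sdiff_eq_empty_iff_subset.mp this
    rw [Finset.Subset.antisymm hVU hUV]
    exact Relation.ReflTransGen.refl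
  | succ k ih =>
    intro V hVU hcard
    have hne : (U' \ V).Nonempty := Finset.card_pos.mp (by omega)
    obtain ⟨a, ha⟩ := hne
    obtain ⟨haU', haV⟩ := Finset.mem_sdiff.mp ha
    have hVnbr : ∀ b ∈ V, isNbrF w i b := fun b hb => hU' b (hVU hb)
    obtain ⟨p, h1, h2, h3, h4, -, -, -⟩ :=
      step_insert w i V a hVnbr (hU' a haU') haV
    have hKzero : (Finset.univ.filter (fun m : Fin n =>
        (p : ℕ) < m ∧ (m : ℕ) < a ∧ ((wUF w i V) p : ℕ) < ((wUF w i V) m : ℕ)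
          ∧ ((wUF w i V) m : ℕ) < ((wUF w i V) a : ℕ))).card = 0 := by
      rw [Finset.card_eq_zero]
      refine Finset.eq_empty_iff_forall_notMem.mpr (fun m hm => ?_)
      simp only [Finset.mem_filter, Finset.mem_univ, true_and] at hm
      exact h4 m hm.1 hm.2.1 ⟨hm.2.2.1, hm.2.2.2⟩
    have hlen : len (wUF w i (insert a V)) = len (wUF w i V) + 1 := by
      rw [h3, len_mul_swap (wUF w i V) p a h1 h2, hKzero]
    have hpa_ne : p ≠ a := fun hc => (Nat.ne_of_lt h1) (congrArg Fin.val hc)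
    refine Relation.ReflTransGen.head
      ⟨⟨Equiv.swap p a, ⟨p, a, hpa_ne, rfl⟩, h3⟩, hlen⟩ ?_
    refine ih (insert a V) (Finset.insert_subset haU' hVU) ?_
    rw [Finset.sdiff_insert, Finset.card_erase_of_mem ha, hcard]
    omega


end Aux47

/-- Lemma 4.7(1): for `U, U' ⊆ φ_i(w)`, one has `w_{U,i} ≤ w_{U',i}` in Bruhat
order if and only if `U ⊆ U'`. Consequently `{w_{U,i} : U ⊆ φ_i(w)}` is a
Boolean lattice under Bruhat order. -/
theorem wU_le_iff_subset {n : ℕ} (w : Equiv.Perm (Fin n)) (i : Fin n)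
    (U U' : Finset (Fin n)) (hU : ∀ a ∈ U, isNbrF w i a)
    (hU' : ∀ a ∈ U', isNbrF w i a) :
    bruhatLE (wUF w i U) (wUF w i U') ↔ U ⊆ U' := by
  classical
  constructor
  · intro h a haU
    have hmono := rk_le_of_bruhatLE h ((a : ℕ)) ((w a : ℕ))
    have F1 := rk_wUF w i U hU ((a : ℕ)) ((w a : ℕ))
    have F2 := rk_wUF w i U' hU' ((a : ℕ)) ((w a : ℕ))
    have hna := hU a haU
    have hDU : ∃ j ∈ U, (i : ℕ) < (a : ℕ) ∧ (a : ℕ) ≤ (j : ℕ)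
        ∧ (w i : ℕ) < (w a : ℕ) ∧ (w a : ℕ) ≤ (w j : ℕ) :=
      ⟨a, haU, (nbr_lt hna).1, le_refl _, (nbr_lt hna).2, le_refl _⟩
    rw [if_pos hDU] at F1
    have hDU' : ∃ j ∈ U', (i : ℕ) < (a : ℕ) ∧ (a : ℕ) ≤ (j : ℕ)
        ∧ (w i : ℕ) < (w a : ℕ) ∧ (w a : ℕ) ≤ (w j : ℕ) := by
      by_contra hn
      rw [if_neg hn] at F2
      omega
    obtain ⟨j, hjU', hC⟩ := hDU'
    have hrect := (hU' j hjU').2.2.2 a (Fin.le_def.mpr (by omega))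
      (Fin.le_def.mpr (by omega)) (Fin.le_def.mpr (by omega)) (Fin.le_def.mpr (by omega))
    rcases hrect with h' | h'
    · exact absurd (congrArg Fin.val h') (by have := (nbr_lt hna).1; omega)
    · rw [h']; exact hjU'
  · intro hsub
    exact bruhat_chain w i U' hU' (U' \ U).card U hsub rfl
end

section
/- Let w ∈ S_n, w ≠ w₀, and suppose (i,j) is an addable cell of dom(w) with j = α(w). Then i+1 ∈ φ_i(w), i.e., ℓ(w t_{i,i+1}) = ℓ(w) + 1, and moreover φ_i(w) \ {i+1} ⊆ φ_{i+1}(w s_i). -/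
/-- The value `w(i)` in 1-based one-line notation, for the permutation of
`{1, …, n}` determined by `w : Equiv.Perm (Fin n)` (extended by the identity
outside `[1,n]`, matching the embedding `S_n ↪ S_+`). -/
def act {n : ℕ} (w : Equiv.Perm (Fin n)) (i : ℕ) : ℕ :=
  if h : 1 ≤ i ∧ i ≤ n then ((w ⟨i - 1, by omega⟩ : Fin n) : ℕ) + 1 else i

/-- The Rothe diagram `D(w) = {(i,j) : w(i) > j and w⁻¹(j) > i}`, 1-based. -/
def rd {n : ℕ} (w : Equiv.Perm (Fin n)) : Set (ℕ × ℕ) :=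
  {p | 1 ≤ p.1 ∧ 1 ≤ p.2 ∧ p.2 < act w p.1 ∧ p.1 < act w⁻¹ p.2}

/-- The dominant part `dom(w)` of the Rothe diagram: the largest Young-diagram
shaped subset, i.e. cells whose whole upper-left rectangle lies in `D(w)`. -/
def domP {n : ℕ} (w : Equiv.Perm (Fin n)) : Set (ℕ × ℕ) :=
  {p | 1 ≤ p.1 ∧ 1 ≤ p.2 ∧
    ∀ q : ℕ × ℕ, 1 ≤ q.1 → 1 ≤ q.2 → q.1 ≤ p.1 → q.2 ≤ p.2 → q ∈ rd w}

/-- `(i,j)` is an addable cell of `dom(w)`. -/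
def addableP {n : ℕ} (w : Equiv.Perm (Fin n)) (i j : ℕ) : Prop :=
  1 ≤ i ∧ 1 ≤ j ∧ (i, j) ∉ domP w ∧
    (1 < i → (i - 1, j) ∈ domP w) ∧ (1 < j → (i, j - 1) ∈ domP w)

/-- `(i,j)` is an addable cell of `dom(w)` with `j = α(w)`, i.e. `i + j ≤ n` and
`j` is the leftmost column containing an addable cell `(i',j')` with `i'+j' ≤ n`. -/
def alphaCell {n : ℕ} (w : Equiv.Perm (Fin n)) (i j : ℕ) : Prop :=
  addableP w i j ∧ i + j ≤ n ∧
    ∀ i' j', addableP w i' j' → i' + j' ≤ n → j ≤ j'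

/-- `(a, w(a))` is a neighbor of `(i, w(i))` in the graph of `w` (1-based):
`i ≤ a`, `w(i) ≤ w(a)`, `(a, w(a)) ≠ (i, w(i))`, and no other point of the
graph of `w` lies in the rectangle `[i,a] × [w(i), w(a)]`. -/
def isNbrP {n : ℕ} (w : Equiv.Perm (Fin n)) (i a : ℕ) : Prop :=
  i ≤ a ∧ act w i ≤ act w a ∧ (a, act w a) ≠ (i, act w i) ∧
    ∀ a', i ≤ a' → a' ≤ a → act w i ≤ act w a' → act w a' ≤ act w a →
      a' = i ∨ a' = a

lemma act_of_le {n : ℕ} (w : Equiv.Perm (Fin n)) {i : ℕ} (h1 : 1 ≤ i) (h2 : i ≤ n) :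
    act w i = (w ⟨i - 1, by omega⟩ : Fin n) + 1 := dif_pos ⟨h1, h2⟩

lemma act_mem {n : ℕ} (w : Equiv.Perm (Fin n)) {i : ℕ} (h1 : 1 ≤ i) (h2 : i ≤ n) :
    1 ≤ act w i ∧ act w i ≤ n := by
  rw [act_of_le w h1 h2]
  have := (w ⟨i - 1, by omega⟩).isLt
  omega

lemma act_inv_act {n : ℕ} (w : Equiv.Perm (Fin n)) {i : ℕ} (h1 : 1 ≤ i) (h2 : i ≤ n) :
    act w⁻¹ (act w i) = i := by
  have h3 := act_mem w h1 h2
  rw [act_of_le w h1 h2] at h3 ⊢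
  rw [act_of_le w⁻¹ (by omega) (by omega)]
  have : (⟨(w ⟨i - 1, by omega⟩ : Fin n) + 1 - 1, by omega⟩ : Fin n) = w ⟨i - 1, by omega⟩ := by
    apply Fin.ext; simp
  rw [this, ← Equiv.Perm.mul_apply, inv_mul_cancel, Equiv.Perm.one_apply]
  simp
  omega

lemma act_act_inv {n : ℕ} (w : Equiv.Perm (Fin n)) {i : ℕ} (h1 : 1 ≤ i) (h2 : i ≤ n) :
    act w (act w⁻¹ i) = i := by
  have := act_inv_act w⁻¹ h1 h2
  rwa [inv_inv] at this

lemma act_inj {n : ℕ} (w : Equiv.Perm (Fin n)) {i j : ℕ} (hi1 : 1 ≤ i) (hi2 : i ≤ n)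
    (hj1 : 1 ≤ j) (hj2 : j ≤ n) (h : act w i = act w j) : i = j := by
  have := act_inv_act w hi1 hi2
  rw [h, act_inv_act w hj1 hj2] at this
  omega

lemma domP_rect {n : ℕ} {w : Equiv.Perm (Fin n)} {p q : ℕ × ℕ} (hp : p ∈ domP w)
    (h1 : 1 ≤ q.1) (h2 : 1 ≤ q.2) (h3 : q.1 ≤ p.1) (h4 : q.2 ≤ p.2) : q ∈ rd w :=
  hp.2.2 q h1 h2 h3 h4

lemma domP_mono {n : ℕ} {w : Equiv.Perm (Fin n)} {p q : ℕ × ℕ} (hp : p ∈ domP w)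
    (h1 : 1 ≤ q.1) (h2 : 1 ≤ q.2) (h3 : q.1 ≤ p.1) (h4 : q.2 ≤ p.2) : q ∈ domP w :=
  ⟨h1, h2, fun r r1 r2 r3 r4 => hp.2.2 r r1 r2 (r3.trans h3) (r4.trans h4)⟩

lemma addable_act {n : ℕ} {w : Equiv.Perm (Fin n)} {i j : ℕ} (h : addableP w i j)
    (hn : i + j ≤ n) : act w i = j := by
  obtain ⟨hi1, hj1, hnd, hup, hleft⟩ := h
  have hin : i ≤ n := by omega
  have hjn : j ≤ n := by omega
  -- (i, j) ∉ rd w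
  have hnrd : (i, j) ∉ rd w := by
    intro hrd
    apply hnd
    refine ⟨hi1, hj1, fun q q1 q2 q3 q4 => ?_⟩
    rcases Nat.lt_or_ge q.2 j with hq2 | hq2
    · exact domP_rect (hleft (by omega)) q1 q2 q3 (by omega)
    · have hq2' : q.2 = j := by omega
      rcases Nat.lt_or_ge q.1 i with hq1 | hq1
      · exact domP_rect (hup (by omega)) q1 q2 (by omega) (by omega)
      · have : q = (i, j) := Prod.ext (by omega) hq2'
        rwa [this]
  have hmem := act_mem w hi1 hin
  -- act w i ≥ j
  have hge : j ≤ act w i := by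
    rcases Nat.lt_or_ge 1 j with hj | hj
    · have := domP_rect (hleft hj) (p := (i, j-1)) (q := (i, j-1)) hi1 (by omega) le_rfl le_rfl
      have h2 : j - 1 < act w i := this.2.2.1
      omega
    · omega
  rcases Nat.lt_or_ge j (act w i) with hgt | hle
  · exfalso
    have hinv : act w⁻¹ j ≤ i := by
      by_contra hc
      exact hnrd ⟨hi1, hj1, hgt, show i < act w⁻¹ j by omega⟩
    have hr1 := act_mem w⁻¹ hj1 hjn
    have hact : act w (act w⁻¹ j) = j := act_act_inv w hj1 hjn
    have hne : act w⁻¹ j ≠ i := by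
      intro he; rw [he] at hact; omega
    have hil : 1 < i := by omega
    have h := (domP_rect (hup hil) (q := (act w⁻¹ j, j)) (by omega) hj1 (by omega) le_rfl)
    have h2 : j < act w (act w⁻¹ j) := h.2.2.1
    omega
  · omega

lemma alpha_succ {n : ℕ} {w : Equiv.Perm (Fin n)} {i j : ℕ} (h : alphaCell w i j) :
    act w i < act w (i + 1) := by
  classical
  obtain ⟨hadd, hn, hmin⟩ := h
  obtain ⟨hi1, hj1, hnd, hup, hleft⟩ := hadd
  have hwi : act w i = j := addable_act ⟨hi1, hj1, hnd, hup, hleft⟩ hn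
  have hi1n : i + 1 ≤ n := by omega
  have hmmem := act_mem w (i := i + 1) (by omega) hi1n
  have hne : act w (i + 1) ≠ j := by
    intro he
    have : i + 1 = i := act_inj w (by omega) hi1n hi1 (by omega) (by rw [he, hwi])
    omega
  rcases Nat.lt_or_ge j (act w (i + 1)) with hlt | hge
  · omega
  exfalso
  set m := act w (i + 1) with hm
  have hmj : m < j := by omega
  have hj2 : 1 < j := by omega
  have hdl := hleft hj2
  -- every cell (q1, q2) with q1 ≤ i+1, q2 ≤ m - 1 is in rd w
  have hrect : ∀ q1 q2 : ℕ, 1 ≤ q1 → 1 ≤ q2 → q1 ≤ i + 1 → q2 ≤ m - 1 → (q1, q2) ∈ rd w := by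
    intro q1 q2 hq1 hq2 hq3 hq4
    rcases Nat.lt_or_ge q1 (i + 1) with hq | hq
    · exact domP_rect hdl hq1 hq2 (by omega) (by omega)
    · have hq1' : q1 = i + 1 := by omega
      have h1 : i < act w⁻¹ q2 := (domP_rect hdl (q := (i, q2)) hi1 hq2 le_rfl (by omega)).2.2.2
      have h2 : act w⁻¹ q2 ≠ i + 1 := by
        intro he
        have h3 : act w (act w⁻¹ q2) = q2 := act_act_inv w hq2 (by omega)
        rw [he] at h3
        omega
      refine ⟨by omega, hq2, ?_, ?_⟩
      · show q2 < act w q1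
        rw [hq1']
        omega
      · show q1 < act w⁻¹ q2
        omega
  -- the top cell (i+1, m) is not in domP
  have htop : ∀ s : ℕ, i + 1 ≤ s → (s, m) ∉ domP w := by
    intro s hs hc
    have h1 : m < act w (i + 1) :=
      (domP_rect hc (q := (i + 1, m)) (by omega) (by omega) hs le_rfl).2.2.1
    omega
  set r := Nat.findGreatest (fun s => (s, m) ∈ domP w) (i + 1) with hr
  have hrle : r ≤ i + 1 := Nat.findGreatest_le _
  have hri : r ≤ i := by
    by_contra hc
    have hmem : (r, m) ∈ domP w := Nat.findGreatest_of_ne_zero hr.symm (by omega)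
    exact htop r (by omega) hmem
  have hadd' : addableP w (r + 1) m := by
    refine ⟨by omega, by omega, ?_, ?_, ?_⟩
    · intro hc
      have : r + 1 ≤ r := Nat.le_findGreatest (by omega) hc
      omega
    · intro hr1
      have hmem : (r, m) ∈ domP w := Nat.findGreatest_of_ne_zero hr.symm (by omega)
      simpa using hmem
    · intro hm1
      refine ⟨by omega, by omega, fun q q1 q2 q3 q4 => ?_⟩
      have hq : q = (q.1, q.2) := rfl
      rw [hq]
      exact hrect q.1 q.2 q1 q2 (by omega) (by omega)
  have := hmin (r + 1) m hadd' (by omega)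
  omega

lemma swap_adj_lt {n : ℕ} {k k' : Fin n} (hk : (k : ℕ) + 1 = (k' : ℕ)) {a b : Fin n}
    (hab : a < b) (hne : ¬(a = k ∧ b = k')) :
    Equiv.swap k k' a < Equiv.swap k k' b := by
  have hab' : (a : ℕ) < (b : ℕ) := hab
  rcases eq_or_ne a k with rfl | hak
  · rw [Equiv.swap_apply_left]
    have hbk' : b ≠ k' := fun h => hne ⟨rfl, h⟩
    rw [Equiv.swap_apply_of_ne_of_ne (ne_of_gt hab) hbk']
    have h1 : (b : ℕ) ≠ (k' : ℕ) := fun h => hbk' (Fin.ext h)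
    rw [Fin.lt_def]
    omega
  · rcases eq_or_ne a k' with rfl | hak'
    · rw [Equiv.swap_apply_right]
      have hbk : b ≠ k := by
        intro h
        have : (b : ℕ) = (k : ℕ) := congrArg Fin.val h
        omega
      rw [Equiv.swap_apply_of_ne_of_ne hbk (ne_of_gt hab), Fin.lt_def]
      omega
    · rw [Equiv.swap_apply_of_ne_of_ne hak hak']
      rcases eq_or_ne b k with rfl | hbk
      · rw [Equiv.swap_apply_left, Fin.lt_def]
        omega
      · rcases eq_or_ne b k' with rfl | hbk'
        · rw [Equiv.swap_apply_right, Fin.lt_def]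
          have h2 : (a : ℕ) ≠ (k : ℕ) := fun h => hak (Fin.ext h)
          omega
        · rw [Equiv.swap_apply_of_ne_of_ne hbk hbk']
          exact hab

lemma len_mul_swap_s15 {n : ℕ} (w : Equiv.Perm (Fin n)) (k k' : Fin n)
    (hk : (k : ℕ) + 1 = (k' : ℕ)) (hlt : w k < w k') :
    len (w * Equiv.swap k k') = len w + 1 := by
  set s := Equiv.swap k k' with hs
  have hkk' : k < k' := by rw [Fin.lt_def]; omega
  have hsk : s k = k' := Equiv.swap_apply_left k k'
  have hsk' : s k' = k := Equiv.swap_apply_right k k'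
  have hss : ∀ x, s (s x) = x := fun x => Equiv.swap_apply_self k k' x
  have key : Finset.univ.filter (fun p : Fin n × Fin n => p.1 < p.2 ∧ (w * s) p.2 < (w * s) p.1)
      = insert (k, k')
        ((Finset.univ.filter (fun p : Fin n × Fin n => p.1 < p.2 ∧ w p.2 < w p.1)).image
          (fun p => (s p.1, s p.2))) := by
    ext ⟨a, b⟩
    rw [Finset.mem_filter]
    simp only [Finset.mem_filter, Finset.mem_insert, Finset.mem_image, Finset.mem_univ,
      true_and, Equiv.Perm.mul_apply, Prod.mk.injEq, Prod.exists]
    constructor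
    · rintro ⟨h1, h2⟩
      by_cases hab : a = k ∧ b = k'
      · exact Or.inl hab
      · have hsab : s a < s b := by
          by_contra hc
          push_neg at hc
          rcases lt_or_eq_of_le hc with hlt2 | heq
          · by_cases hba : s b = k ∧ s a = k'
            · exact hab ⟨by rw [← hss a, hba.2]; exact hsk', by rw [← hss b, hba.1]; exact hsk⟩
            · have h3 := swap_adj_lt hk hlt2 hba
              rw [hss, hss] at h3
              exact absurd h1 (not_lt.mpr (le_of_lt h3))
          · have hba : b = a := s.injective heq
            rw [hba] at h1
            exact lt_irrefl a h1
        exact Or.inr ⟨s a, s b, ⟨hsab, h2⟩, hss a, hss b⟩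
    · rintro (⟨rfl, rfl⟩ | ⟨x, y, ⟨hxy, hw⟩, rfl, rfl⟩)
      · exact ⟨hkk', by rwa [hsk, hsk']⟩
      · have hne : ¬(x = k ∧ y = k') := by
          rintro ⟨rfl, rfl⟩
          exact absurd hlt (not_lt.mpr (le_of_lt hw))
        exact ⟨swap_adj_lt hk hxy hne, by rwa [hss, hss]⟩
  have hnotmem : (k, k') ∉ (Finset.univ.filter
      (fun p : Fin n × Fin n => p.1 < p.2 ∧ w p.2 < w p.1)).image (fun p => (s p.1, s p.2)) := by
    simp only [Finset.mem_image, Finset.mem_filter, Finset.mem_univ, true_and, Prod.mk.injEq,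
      Prod.exists]
    rintro ⟨x, y, ⟨hxy, -⟩, hx, hy⟩
    have hx' : x = k' := by rw [← hss x, hx]; exact hsk
    have hy' : y = k := by rw [← hss y, hy]; exact hsk'
    rw [hx', hy'] at hxy
    exact absurd hxy (not_lt.mpr (le_of_lt hkk'))
  have hinj : Function.Injective (fun p : Fin n × Fin n => (s p.1, s p.2)) := by
    rintro ⟨a, b⟩ ⟨c, d⟩ hcd
    simp only [Prod.mk.injEq] at hcd
    rw [Prod.mk.injEq]
    exact ⟨s.injective hcd.1, s.injective hcd.2⟩
  rw [len, len, key, Finset.card_insert_of_notMem hnotmem,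
    Finset.card_image_of_injective _ hinj, Nat.add_comm]

lemma simpleRefl_eq {n : ℕ} {i : ℕ} (h1 : 1 ≤ i) (h2 : i < n) :
    simpleRefl n i = Equiv.swap ⟨i - 1, by omega⟩ ⟨i, by omega⟩ := dif_pos ⟨h1, h2⟩

lemma act_mul_s_left {n : ℕ} (w : Equiv.Perm (Fin n)) {i : ℕ} (h1 : 1 ≤ i) (h2 : i < n) :
    act (w * simpleRefl n i) i = act w (i + 1) := by
  have key : ((w * simpleRefl n i) ⟨i - 1, by omega⟩ : Fin n) = w ⟨i + 1 - 1, by omega⟩ := by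
    rw [simpleRefl_eq h1 h2, Equiv.Perm.mul_apply]
    congr 1
    rw [Equiv.swap_apply_left]
    apply Fin.ext
    simp
  rw [act_of_le _ h1 (by omega), act_of_le _ (by omega) h2, key]

lemma act_mul_s_right {n : ℕ} (w : Equiv.Perm (Fin n)) {i : ℕ} (h1 : 1 ≤ i) (h2 : i < n) :
    act (w * simpleRefl n i) (i + 1) = act w i := by
  have key : ((w * simpleRefl n i) ⟨i + 1 - 1, by omega⟩ : Fin n) = w ⟨i - 1, by omega⟩ := by
    rw [simpleRefl_eq h1 h2, Equiv.Perm.mul_apply]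
    congr 1
    have he : (⟨i + 1 - 1, by omega⟩ : Fin n) = ⟨i, by omega⟩ := by
      apply Fin.ext
      simp
    rw [he, Equiv.swap_apply_right]
  rw [act_of_le _ (by omega) h2, act_of_le _ h1 (by omega), key]

lemma act_mul_s_other {n : ℕ} (w : Equiv.Perm (Fin n)) {i : ℕ} (h1 : 1 ≤ i) (h2 : i < n)
    {x : ℕ} (hx : x ≠ i) (hx' : x ≠ i + 1) : act (w * simpleRefl n i) x = act w x := by
  by_cases hxr : 1 ≤ x ∧ x ≤ n
  · have key : ((w * simpleRefl n i) ⟨x - 1, by omega⟩ : Fin n) = w ⟨x - 1, by omega⟩ := by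
      rw [simpleRefl_eq h1 h2, Equiv.Perm.mul_apply]
      congr 1
      apply Equiv.swap_apply_of_ne_of_ne
      · exact fun h => hx (by have := congrArg Fin.val h; simp at this; omega)
      · exact fun h => hx' (by have := congrArg Fin.val h; simp at this; omega)
    rw [act_of_le _ hxr.1 hxr.2, act_of_le _ hxr.1 hxr.2, key]
  · rw [act, act, dif_neg hxr, dif_neg hxr]

/-- Lemma 5.1(2)-(3): if `w ≠ w₀` and `(i,j)` is an addable cell of `dom(w)`
with `j = α(w)`, then `i+1 ∈ φ_i(w)` (i.e., `(i+1, w(i+1))` is a neighbor of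
`(i, w(i))`, equivalently `ℓ(w t_{i,i+1}) = ℓ(w) + 1`), and moreover
`φ_i(w) \ {i+1} ⊆ φ_{i+1}(w s_i)`. -/
theorem phi_succ_mem_and_subset {n : ℕ} (w : Equiv.Perm (Fin n)) (i j : ℕ)
    (hw : w ≠ longest n) (h : alphaCell w i j) :
    isNbrP w i (i + 1) ∧ len (w * simpleRefl n i) = len w + 1 ∧
      ∀ a, isNbrP w i a → a ≠ i + 1 → isNbrP (w * simpleRefl n i) (i + 1) a := by
  obtain ⟨hadd, hn, hmin⟩ := h
  obtain ⟨hi1, hj1, hnd, hu, hl⟩ := hadd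
  have hsucc : act w i < act w (i + 1) := alpha_succ ⟨⟨hi1, hj1, hnd, hu, hl⟩, hn, hmin⟩
  have hin : i < n := by omega
  have part1 : isNbrP w i (i + 1) := by
    refine ⟨Nat.le_succ i, le_of_lt hsucc, ?_, fun a' ha1 ha2 _ _ => by omega⟩
    intro hc
    have : i + 1 = i := congrArg Prod.fst hc
    omega
  have hlt : w ⟨i - 1, by omega⟩ < w ⟨i, by omega⟩ := by
    rw [act_of_le _ hi1 (by omega), act_of_le _ (show 1 ≤ i + 1 by omega) (by omega)] at hsucc
    rw [Fin.lt_def]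
    have he : (⟨i + 1 - 1, by omega⟩ : Fin n) = (⟨i, by omega⟩ : Fin n) := by
      apply Fin.ext
      simp
    rw [he] at hsucc
    omega
  have part2 : len (w * simpleRefl n i) = len w + 1 := by
    rw [simpleRefl_eq hi1 hin]
    exact len_mul_swap_s15 w _ _ (by simp; omega) hlt
  refine ⟨part1, part2, fun a hnbr hne1 => ?_⟩
  obtain ⟨ha1, ha2, ha3, ha4⟩ := hnbr
  have hai : a ≠ i := by
    intro hc
    rw [hc] at ha3
    exact ha3 rfl
  have ha2' : i + 2 ≤ a := by omega
  have e1 : act (w * simpleRefl n i) (i + 1) = act w i := act_mul_s_right w hi1 hin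
  have e2 : act (w * simpleRefl n i) a = act w a := act_mul_s_other w hi1 hin (by omega) (by omega)
  refine ⟨by omega, by rw [e1, e2]; exact ha2, ?_, ?_⟩
  · intro hc
    have : a = i + 1 := congrArg Prod.fst hc
    omega
  · intro a' h1 h2 h3 h4
    rcases Nat.eq_or_lt_of_le h1 with he | hlt'
    · exact Or.inl he.symm
    · have e3 : act (w * simpleRefl n i) a' = act w a' :=
        act_mul_s_other w hi1 hin (by omega) (by omega)
      rw [e1, e3] at h3
      rw [e3, e2] at h4
      rcases ha4 a' (by omega) h2 h3 h4 with h | h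
      · omega
      · exact Or.inr h
end
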